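/- (Schuette–Nesbitt formula.) Let B_1, …, B_m be events in a probability space, let N := ∑_{i=1}^m 𝟙_{B_i} be the number of these events that occur, and for 0 ≤ n ≤ m let S_n be the n-th symmetric sum (S_0 := 1). Then for arbitrary real coefficients c_0, c_1, …, c_m: ∑_{n=0}^{m} c_n · P(N = n) = ∑_{n=0}^{m} (Δ^n c)(0) · S_n, where Δ is the forward difference operator, (Δc)(k) = c_{k+1} − c_k, and Δ^n is its n-th iterate. -/

import Mathlib

open MeasureTheory Finset
open scoped Classical

/-- The forward difference operator `(Δc)(k) = c(k+1) - c(k)`. -/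
def forwardDiff (c : ℕ → ℝ) : ℕ → ℝ := fun k => c (k+1) - c k

lemma newton : ∀ (k : ℕ) (c : ℕ → ℝ),
    ∑ n ∈ Finset.range (k+1), (k.choose n : ℝ) * (forwardDiff^[n] c) 0 = c k := by
  intro k
  induction k with
  | zero => intro c; simp
  | succ k ih =>
    intro c
    rw [Finset.sum_range_succ']
    have h1 : ∀ n ∈ Finset.range (k+1),
        ((k+1).choose (n+1) : ℝ) * (forwardDiff^[n+1] c) 0
          = (k.choose n : ℝ) * (forwardDiff^[n] (forwardDiff c)) 0
            + (k.choose (n+1) : ℝ) * (forwardDiff^[n+1] c) 0 := by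
      intro n _
      rw [Nat.choose_succ_succ, Function.iterate_succ_apply]
      push_cast; ring
    rw [Finset.sum_congr rfl h1, Finset.sum_add_distrib, ih (forwardDiff c)]
    have h2 : ∑ n ∈ Finset.range (k+2), (k.choose n : ℝ) * (forwardDiff^[n] c) 0 = c k := by
      rw [Finset.sum_range_succ, Nat.choose_succ_self, ← ih c]; simp
    rw [Finset.sum_range_succ' (fun n => (k.choose n : ℝ) * (forwardDiff^[n] c) 0) (k+1)] at h2
    simp only [Function.iterate_zero_apply, Nat.choose_zero_right, Nat.cast_one, one_mul,
      forwardDiff] at *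
    linarith

lemma newton_ext (m k : ℕ) (hk : k ≤ m) (c : ℕ → ℝ) :
    ∑ n ∈ Finset.range (m+1), (k.choose n : ℝ) * (forwardDiff^[n] c) 0 = c k := by
  rw [← newton k c]
  symm
  apply Finset.sum_subset (Finset.range_subset_range.mpr (by omega))
  intro n _ hn
  have : k < n := by simpa using hn
  simp [Nat.choose_eq_zero_of_lt this]

/-- Schuette–Nesbitt formula: for events `B_1,…,B_m`, coverage number
`N = ∑ 𝟙_{B_i}`, symmetric sums `S_n` and arbitrary real coefficients `c_0,…,c_m`:
`∑_{n=0}^m c_n P(N = n) = ∑_{n=0}^m (Δ^n c)(0) S_n`. -/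
theorem statement7 {Ω : Type*} [MeasurableSpace Ω] (P : Measure Ω) [IsProbabilityMeasure P]
    (m : ℕ) (B : Fin m → Set Ω) (hB : ∀ i, MeasurableSet (B i))
    (N : Ω → ℕ) (hN : ∀ ω, N ω = (Finset.univ.filter (fun i => ω ∈ B i)).card)
    (S : ℕ → ℝ) (hS0 : S 0 = 1)
    (hS : ∀ n, 1 ≤ n →
      S n = ∑ J ∈ Finset.powersetCard n (Finset.univ : Finset (Fin m)),
        (P (⋂ i ∈ J, B i)).toReal)
    (c : ℕ → ℝ) :
    ∑ n ∈ Finset.range (m+1), c n * (P {ω | N ω = n}).toReal =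
      ∑ n ∈ Finset.range (m+1), (forwardDiff^[n] c) 0 * S n := by
  -- atoms
  set A : Finset (Fin m) → Set Ω :=
    fun T => {ω | Finset.univ.filter (fun i => ω ∈ B i) = T} with hA
  have hmA : ∀ T, MeasurableSet (A T) := by
    intro T
    have : A T = ⋂ i, (if i ∈ T then B i else (B i)ᶜ) := by
      ext ω
      simp only [hA, Set.mem_setOf_eq, Set.mem_iInter]
      constructor
      · intro h i
        by_cases hi : i ∈ T
        · have hi' := hi
          rw [← h] at hi'
          simp only [hi, if_true]
          exact (Finset.mem_filter.mp hi').2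
        · simp only [hi, if_false, Set.mem_compl_iff]
          intro hw
          exact hi (h ▸ Finset.mem_filter.mpr ⟨Finset.mem_univ i, hw⟩)
      · intro h
        ext i
        have := h i
        by_cases hi : i ∈ T <;> simp [hi] at this <;> simp [hi, this]
    rw [this]
    exact MeasurableSet.iInter fun i => by
      by_cases hi : i ∈ T <;> simp [hi, hB i, (hB i).compl]
  have hdisj : ∀ (s : Finset (Finset (Fin m))),
      (↑s : Set (Finset (Fin m))).PairwiseDisjoint A := by
    intro s T _ T' _ hTT'
    rw [Function.onFun, Set.disjoint_left]
    intro ω hω hω'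
    exact hTT' (hω.symm.trans hω')
  have key : ∀ (s : Finset (Finset (Fin m))),
      (P (⋃ T ∈ s, A T)).toReal = ∑ T ∈ s, (P (A T)).toReal := by
    intro s
    rw [measure_biUnion_finset (hdisj s) (fun T _ => hmA T)]
    exact ENNReal.toReal_sum fun T _ => measure_ne_top P _
  set p : Finset (Fin m) → ℝ := fun T => (P (A T)).toReal with hp
  have hcard : ∀ T : Finset (Fin m), T.card ≤ m :=
    fun T => le_trans (Finset.card_le_univ T) (by simp)
  -- P(N = n)
  have hPN : ∀ n, (P {ω | N ω = n}).toReal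
      = ∑ T ∈ Finset.univ.filter (fun T => T.card = n), p T := by
    intro n
    have hset : {ω | N ω = n} = ⋃ T ∈ Finset.univ.filter (fun T => T.card = n), A T := by
      ext ω
      simp only [Set.mem_setOf_eq, hN, Set.mem_iUnion, Finset.mem_filter, Finset.mem_univ,
        true_and, hA]
      constructor
      · intro h
        exact ⟨Finset.univ.filter (fun i => ω ∈ B i), h, rfl⟩
      · rintro ⟨T, hT, rfl⟩
        exact hT
    rw [hset, key]
  -- P(⋂_{i∈J} B i)
  have hPJ : ∀ J : Finset (Fin m), (P (⋂ i ∈ J, B i)).toReal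
      = ∑ T ∈ Finset.univ.filter (fun T => J ⊆ T), p T := by
    intro J
    have hset : (⋂ i ∈ J, B i) = ⋃ T ∈ Finset.univ.filter (fun T => J ⊆ T), A T := by
      ext ω
      simp only [Set.mem_iInter, Set.mem_iUnion, Finset.mem_filter, Finset.mem_univ, true_and,
        hA, Set.mem_setOf_eq]
      constructor
      · intro h
        exact ⟨Finset.univ.filter (fun i => ω ∈ B i),
          fun i hi => Finset.mem_filter.mpr ⟨Finset.mem_univ i, h i hi⟩, rfl⟩
      · rintro ⟨T, hT, rfl⟩
        intro i hi
        exact (Finset.mem_filter.mp (hT hi)).2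
    rw [hset, key]
  -- S n = ∑_T choose(|T|, n) p T
  have hSn : ∀ n ∈ Finset.range (m+1),
      S n = ∑ T ∈ (Finset.univ : Finset (Finset (Fin m))), ((T.card.choose n : ℝ)) * p T := by
    intro n _
    rcases Nat.eq_zero_or_pos n with hn | hn
    · subst hn
      have huniv : (Set.univ : Set Ω) = ⋃ T ∈ (Finset.univ : Finset (Finset (Fin m))), A T := by
        ext ω
        refine ⟨fun _ => ?_, fun _ => trivial⟩
        exact Set.mem_iUnion.mpr ⟨_, Set.mem_iUnion.mpr ⟨Finset.mem_univ _, rfl⟩⟩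
      have h1 : (1 : ℝ) = ∑ T ∈ (Finset.univ : Finset (Finset (Fin m))), p T := by
        have := key Finset.univ
        rw [← huniv] at this
        simpa using this
      rw [hS0, h1]
      simp
    · rw [hS n hn]
      have h2 : ∀ J ∈ Finset.powersetCard n (Finset.univ : Finset (Fin m)),
          (P (⋂ i ∈ J, B i)).toReal
          = ∑ T ∈ (Finset.univ : Finset (Finset (Fin m))), if J ⊆ T then p T else 0 := by
        intro J _
        rw [hPJ J, Finset.sum_filter]
      rw [Finset.sum_congr rfl h2, Finset.sum_comm]
      apply Finset.sum_congr rfl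
      intro T _
      rw [← Finset.sum_filter]
      have h3 : (Finset.powersetCard n (Finset.univ : Finset (Fin m))).filter (fun J => J ⊆ T)
          = Finset.powersetCard n T := by
        ext J
        simp only [Finset.mem_filter, Finset.mem_powersetCard, Finset.subset_univ, true_and]
        tauto
      rw [h3, Finset.sum_const, Finset.card_powersetCard, nsmul_eq_mul]
  -- both sides equal ∑_T c(|T|) p T
  have hmaps : ∀ T ∈ (Finset.univ : Finset (Finset (Fin m))), T.card ∈ Finset.range (m+1) :=
    fun T _ => Finset.mem_range.mpr (Nat.lt_succ_of_le (hcard T))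
  have hL : ∑ n ∈ Finset.range (m+1), c n * (P {ω | N ω = n}).toReal
      = ∑ T ∈ (Finset.univ : Finset (Finset (Fin m))), c T.card * p T := by
    rw [← Finset.sum_fiberwise_of_maps_to hmaps (fun T => c T.card * p T)]
    apply Finset.sum_congr rfl
    intro n _
    rw [hPN n, Finset.mul_sum]
    apply Finset.sum_congr rfl
    intro T hT
    rw [(Finset.mem_filter.mp hT).2]
  have hR : ∑ n ∈ Finset.range (m+1), (forwardDiff^[n] c) 0 * S n
      = ∑ T ∈ (Finset.univ : Finset (Finset (Fin m))), c T.card * p T := by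
    rw [Finset.sum_congr rfl (fun n hn => by rw [hSn n hn, Finset.mul_sum]), Finset.sum_comm]
    apply Finset.sum_congr rfl
    intro T _
    have h4 : ∑ n ∈ Finset.range (m+1), (forwardDiff^[n] c) 0 * ((T.card.choose n : ℝ) * p T)
        = (∑ n ∈ Finset.range (m+1), (T.card.choose n : ℝ) * (forwardDiff^[n] c) 0) * p T := by
      rw [Finset.sum_mul]
      exact Finset.sum_congr rfl fun n _ => by ring
    rw [h4, newton_ext m T.card (hcard T) c]
  rw [hL, hR]
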